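/- Let a, b > 0 and f : [0,∞) → [0,1] be continuous. Let y : [-1,∞) → [0,∞) be continuous, differentiable on (0,∞), satisfying y'(t) = −a y(t) + b f(y(t−1)) for all t > 0. If y(0) < b/a, then y(t) < b/a for all t ≥ 0. -/

import Mathlib

open Real

theorem solution_bounded (a b : ℝ) (f : ℝ → ℝ) (y : ℝ → ℝ)
    (ha : 0 < a) (hb : 0 < b)
    (hf_cont : ContinuousOn f (Set.Ici 0))
    (hf_range : ∀ ξ : ℝ, 0 ≤ ξ → f ξ ∈ Set.Icc (0:ℝ) 1)
    (hy_nonneg : ∀ t : ℝ, -1 ≤ t → 0 ≤ y t)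
    (hy_cont : ContinuousOn y (Set.Ici (-1)))
    (hy_deriv : ∀ t : ℝ, 0 < t → HasDerivAt y (-a * y t + b * f (y (t - 1))) t)
    (hy0 : y 0 < b / a) :
    ∀ t : ℝ, 0 ≤ t → y t < b / a := by
  set g : ℝ → ℝ := fun t => Real.exp (a * t) * (y t - b / a) with hg
  have hgderiv : ∀ t : ℝ, 0 < t →
      HasDerivAt g (Real.exp (a * t) * (b * f (y (t - 1)) - b)) t := by
    intro t ht
    have h1 : HasDerivAt (fun t => Real.exp (a * t)) (a * Real.exp (a * t)) t := by
      simpa [mul_comm, Function.comp_def] using (Real.hasDerivAt_exp (a * t)).comp t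
        ((hasDerivAt_id t).const_mul a)
    have h2 : HasDerivAt (fun t => y t - b / a) (-a * y t + b * f (y (t - 1))) t :=
      (hy_deriv t ht).sub_const _
    have := h1.mul h2
    refine HasDerivAt.congr_deriv this ?_
    have hab : a * (b / a) = b := mul_div_cancel₀ b ha.ne'
    linear_combination (-Real.exp (a * t)) * hab
  have hgcont : ContinuousOn g (Set.Ici 0) := by
    apply ContinuousOn.mul
    · exact (Real.continuous_exp.comp (continuous_const.mul continuous_id)).continuousOn
    · exact (hy_cont.mono (Set.Ici_subset_Ici.mpr (by norm_num))).sub continuousOn_const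
  have hanti : AntitoneOn g (Set.Ici 0) := by
    apply antitoneOn_of_deriv_nonpos (convex_Ici 0) hgcont
    · intro t ht
      rw [interior_Ici] at ht
      exact (hgderiv t ht).differentiableAt.differentiableWithinAt
    · intro t ht
      rw [interior_Ici] at ht
      rw [(hgderiv t ht).deriv]
      have hy1 : 0 ≤ y (t - 1) := hy_nonneg _ (by linarith [Set.mem_Ioi.mp ht])
      have hf1 := (hf_range _ hy1).2
      have : b * f (y (t - 1)) - b ≤ 0 := by nlinarith
      exact mul_nonpos_of_nonneg_of_nonpos (Real.exp_pos _).le this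
  intro t ht
  have := hanti (Set.self_mem_Ici) ht ht
  have hg0 : g 0 = y 0 - b / a := by simp [hg]
  rw [hg0] at this
  have hpos := Real.exp_pos (a * t)
  have hlt : g t < 0 := lt_of_le_of_lt this (by linarith)
  simp only [hg] at hlt
  nlinarith [hlt]
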